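/- Let F be a field, H the hyperbolic plane on F², and a ∈ F with a ≠ 0. Then: (1) the representation graph G_{H,a} is connected if and only if F has at least 5 elements; and (2) if F has at least 5 elements, then every isotropic vector v (i.e. v with H(v) = 0) satisfies d(0,v) ≤ 3 in G_{H,a}, and diam(G_{H,a}) ≤ 4. -/

import Mathlib

open QuadraticMap Module

/-- The representation graph `G_{q,a}`: vertices are the vectors of `V`, and distinct
`x, y` are adjacent iff `q (x - y) = a`. -/
def repGraph {F V : Type*} [Field F] [AddCommGroup V] [Module F V]
    (q : QuadraticForm F V) (a : F) : SimpleGraph V where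
  Adj x y := x ≠ y ∧ q (x - y) = a
  symm := by
    constructor
    rintro x y ⟨hxy, h⟩
    refine ⟨hxy.symm, ?_⟩
    rw [← neg_sub x y, QuadraticMap.map_neg]
    exact h
  loopless := by constructor; rintro x ⟨h, -⟩; exact h rfl

/-- The hyperbolic plane `H` on `F²`, i.e. the quadratic form `(x, y) ↦ x * y`. -/
noncomputable def hypPlane (F : Type*) [Field F] : QuadraticForm F (F × F) :=
  LinearMap.BilinMap.toQuadraticMap
    ((LinearMap.mul F F).compl₁₂ (LinearMap.fst F F F) (LinearMap.snd F F F))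

theorem hypPlane_apply (F : Type*) [Field F] (v : F × F) : hypPlane F v = v.1 * v.2 := rfl

section RepGraphHelpers

variable {F : Type*} [Field F] {a : F}

lemma repAdj_iff (ha : a ≠ 0) (x y : F × F) :
    (repGraph (hypPlane F) a).Adj x y ↔ (x.1 - y.1) * (x.2 - y.2) = a := by
  constructor
  · rintro ⟨-, h⟩; exact h
  · intro h
    refine ⟨fun he => ?_, h⟩
    rw [he, sub_self, zero_mul] at h
    exact ha h.symm

lemma adj_edist_le_one {V : Type*} {G : SimpleGraph V} {u v : V} (h : G.Adj u v) :
    G.edist u v ≤ 1 := by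
  simpa using SimpleGraph.edist_le h.toWalk

lemma walk_const {V α : Type*} {G : SimpleGraph V} (f : V → α)
    (hf : ∀ u v, G.Adj u v → f u = f v) {u v : V} (h : G.Reachable u v) : f u = f v := by
  obtain ⟨p⟩ := h
  induction p with
  | nil => rfl
  | cons h p ih => exact (hf _ _ h).trans ih

/-- translation graph homomorphism -/
def transHom (F : Type*) [Field F] (a : F) (c : F × F) :
    (repGraph (hypPlane F) a) →g (repGraph (hypPlane F) a) where
  toFun := fun x => x + c
  map_rel' := by
    rintro x y ⟨hne, h⟩
    refine ⟨by simpa using hne, ?_⟩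
    rwa [add_sub_add_right_eq_sub]

lemma edist_translate (c u v : F × F) :
    (repGraph (hypPlane F) a).edist (u + c) (v + c) ≤ (repGraph (hypPlane F) a).edist u v := by
  rcases eq_or_ne ((repGraph (hypPlane F) a).edist u v) ⊤ with h | h
  · rw [h]; exact le_top
  · obtain ⟨p, hp⟩ := SimpleGraph.exists_walk_of_edist_ne_top h
    calc (repGraph (hypPlane F) a).edist (u + c) (v + c)
        ≤ (p.map (transHom F a c)).length := SimpleGraph.edist_le _
      _ = p.length := by rw [SimpleGraph.Walk.length_map]
      _ = _ := hp

lemma edist_zero_sub (u v : F × F) :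
    (repGraph (hypPlane F) a).edist u v ≤ (repGraph (hypPlane F) a).edist 0 (v - u) := by
  have := edist_translate (a := a) u 0 (v - u)
  simpa using this

lemma edist3_fst (ha : a ≠ 0) {s k : F} (hs : s ≠ 0) (hk0 : k ≠ 0)
    (hk1 : k + 1 ≠ 0) (hK : k ^ 2 + k + 1 ≠ 0) :
    (repGraph (hypPlane F) a).edist 0 (s, 0) ≤ 3 := by
  set d := s / (k ^ 2 + k + 1) with hd
  have hd0 : d ≠ 0 := div_ne_zero hs hK
  have hs' : d * (k ^ 2 + k + 1) = s := by rw [hd]; exact div_mul_cancel₀ s hK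
  set t := k * d with htdef
  set u := (k + 1) * d with hudef
  have ht0 : t ≠ 0 := mul_ne_zero hk0 hd0
  have hu0 : u ≠ 0 := mul_ne_zero hk1 hd0
  have e1 : (repGraph (hypPlane F) a).Adj 0 (u, a / u) := by
    rw [repAdj_iff ha]
    show ((0 : F) - u) * (0 - a / u) = a
    field_simp
    ring
  have e3 : (repGraph (hypPlane F) a).Adj (s + t, a / t) (s, 0) := by
    rw [repAdj_iff ha]
    show (s + t - s) * (a / t - 0) = a
    field_simp
    ring
  have e2 : (repGraph (hypPlane F) a).Adj (u, a / u) (s + t, a / t) := by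
    rw [repAdj_iff ha]
    show (u - (s + t)) * (a / u - a / t) = a
    rw [← hs', htdef, hudef]
    field_simp
    ring
  calc (repGraph (hypPlane F) a).edist 0 (s, 0)
      ≤ (repGraph (hypPlane F) a).edist 0 (u, a / u)
        + (repGraph (hypPlane F) a).edist (u, a / u) (s, 0) := SimpleGraph.edist_triangle
    _ ≤ (repGraph (hypPlane F) a).edist 0 (u, a / u)
        + ((repGraph (hypPlane F) a).edist (u, a / u) (s + t, a / t)
          + (repGraph (hypPlane F) a).edist (s + t, a / t) (s, 0)) :=
        add_le_add_right SimpleGraph.edist_triangle _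
    _ ≤ 1 + (1 + 1) :=
        add_le_add (adj_edist_le_one e1)
          (add_le_add (adj_edist_le_one e2) (adj_edist_le_one e3))
    _ = 3 := by norm_num

lemma edist3_snd (ha : a ≠ 0) {s k : F} (hs : s ≠ 0) (hk0 : k ≠ 0)
    (hk1 : k + 1 ≠ 0) (hK : k ^ 2 + k + 1 ≠ 0) :
    (repGraph (hypPlane F) a).edist 0 (0, s) ≤ 3 := by
  set d := s / (k ^ 2 + k + 1) with hd
  have hd0 : d ≠ 0 := div_ne_zero hs hK
  have hs' : d * (k ^ 2 + k + 1) = s := by rw [hd]; exact div_mul_cancel₀ s hK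
  set t := k * d with htdef
  set u := (k + 1) * d with hudef
  have ht0 : t ≠ 0 := mul_ne_zero hk0 hd0
  have hu0 : u ≠ 0 := mul_ne_zero hk1 hd0
  have e1 : (repGraph (hypPlane F) a).Adj 0 (a / u, u) := by
    rw [repAdj_iff ha]
    show ((0 : F) - a / u) * (0 - u) = a
    field_simp
    ring
  have e3 : (repGraph (hypPlane F) a).Adj (a / t, s + t) (0, s) := by
    rw [repAdj_iff ha]
    show (a / t - 0) * (s + t - s) = a
    field_simp
    ring
  have e2 : (repGraph (hypPlane F) a).Adj (a / u, u) (a / t, s + t) := by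
    rw [repAdj_iff ha]
    show (a / u - a / t) * (u - (s + t)) = a
    rw [← hs', htdef, hudef]
    field_simp
    ring
  calc (repGraph (hypPlane F) a).edist 0 (0, s)
      ≤ (repGraph (hypPlane F) a).edist 0 (a / u, u)
        + (repGraph (hypPlane F) a).edist (a / u, u) (0, s) := SimpleGraph.edist_triangle
    _ ≤ (repGraph (hypPlane F) a).edist 0 (a / u, u)
        + ((repGraph (hypPlane F) a).edist (a / u, u) (a / t, s + t)
          + (repGraph (hypPlane F) a).edist (a / t, s + t) (0, s)) :=
        add_le_add_right SimpleGraph.edist_triangle _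
    _ ≤ 1 + (1 + 1) :=
        add_le_add (adj_edist_le_one e1)
          (add_le_add (adj_edist_le_one e2) (adj_edist_le_one e3))
    _ = 3 := by norm_num

lemma card_le_four (S : Set F) (x y z w : F)
    (hS : S ⊆ {x, y, z, w}) : Cardinal.mk S ≤ 4 := by
  calc Cardinal.mk S ≤ Cardinal.mk ({x, y, z, w} : Set F) := Cardinal.mk_le_mk_of_subset hS
    _ ≤ Cardinal.mk ({y, z, w} : Set F) + 1 := Cardinal.mk_insert_le
    _ ≤ (Cardinal.mk ({z, w} : Set F) + 1) + 1 :=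
        add_le_add_left Cardinal.mk_insert_le _
    _ ≤ ((Cardinal.mk ({w} : Set F) + 1) + 1) + 1 :=
        add_le_add_left (add_le_add_left Cardinal.mk_insert_le _) _
    _ = 4 := by rw [Cardinal.mk_singleton]; norm_num

lemma exists_good_k (h5 : 5 ≤ Cardinal.mk F) :
    ∃ k : F, k ≠ 0 ∧ k + 1 ≠ 0 ∧ k ^ 2 + k + 1 ≠ 0 := by
  by_contra hc
  push_neg at hc
  have key : ∀ k : F, k = 0 ∨ k = -1 ∨ k ^ 2 + k + 1 = 0 := fun k => by
    rcases eq_or_ne k 0 with h | h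
    · exact Or.inl h
    rcases eq_or_ne (k + 1) 0 with h1 | h1
    · exact Or.inr (Or.inl (by linear_combination h1))
    · exact Or.inr (Or.inr (hc k h h1))
  by_cases hx : ∃ x : F, x ^ 2 + x + 1 = 0
  · obtain ⟨x, hxr⟩ := hx
    have hsub : (Set.univ : Set F) ⊆ {0, -1, x, -x - 1} := by
      intro k _
      simp only [Set.mem_insert_iff, Set.mem_singleton_iff]
      rcases key k with h | h | h
      · exact Or.inl h
      · exact Or.inr (Or.inl h)
      · have : (k - x) * (k + x + 1) = 0 := by linear_combination h - hxr
        rcases mul_eq_zero.mp this with h' | h'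
        · exact Or.inr (Or.inr (Or.inl (by linear_combination h')))
        · exact Or.inr (Or.inr (Or.inr (by linear_combination h')))
    have h4 : Cardinal.mk F ≤ 4 := by
      have := card_le_four _ 0 (-1) x (-x - 1) hsub
      rwa [Cardinal.mk_univ] at this
    have : (5 : Cardinal) ≤ 4 := h5.trans h4
    norm_num at this
  · push_neg at hx
    have hsub : (Set.univ : Set F) ⊆ {(0 : F), -1, 0, 0} := by
      intro k _
      simp only [Set.mem_insert_iff, Set.mem_singleton_iff]
      rcases key k with h | h | h
      · exact Or.inl h
      · exact Or.inr (Or.inl h)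
      · exact absurd h (hx k)
    have h4 : Cardinal.mk F ≤ 4 := by
      have := card_le_four _ (0 : F) (-1) 0 0 hsub
      rwa [Cardinal.mk_univ] at this
    have : (5 : Cardinal) ≤ 4 := h5.trans h4
    norm_num at this

lemma iso_edist_le3 (ha : a ≠ 0) (h5 : 5 ≤ Cardinal.mk F) (v : F × F)
    (hv : v.1 * v.2 = 0) : (repGraph (hypPlane F) a).edist 0 v ≤ 3 := by
  obtain ⟨k, hk0, hk1, hK⟩ := exists_good_k h5
  obtain ⟨x, y⟩ := v
  rcases mul_eq_zero.mp hv with h | h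
  · simp only at h
    subst h
    rcases eq_or_ne y 0 with rfl | hy
    · have : ((0 : F), (0 : F)) = (0 : F × F) := rfl
      rw [this, SimpleGraph.edist_self]
      norm_num
    · exact edist3_snd ha hy hk0 hk1 hK
  · simp only at h
    subst h
    rcases eq_or_ne x 0 with rfl | hx
    · have : ((0 : F), (0 : F)) = (0 : F × F) := rfl
      rw [this, SimpleGraph.edist_self]
      norm_num
    · exact edist3_fst ha hx hk0 hk1 hK

lemma edist_zero_le4 (ha : a ≠ 0) (h5 : 5 ≤ Cardinal.mk F) (v : F × F) :
    (repGraph (hypPlane F) a).edist 0 v ≤ 4 := by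
  rcases eq_or_ne v.2 0 with h | h
  · exact (iso_edist_le3 ha h5 v (by rw [h, mul_zero])).trans (by norm_num)
  · set i : F × F := (v.1 - a / v.2, 0) with hi
    have hadj : (repGraph (hypPlane F) a).Adj i v := by
      rw [repAdj_iff ha]
      show (v.1 - a / v.2 - v.1) * ((0 : F) - v.2) = a
      field_simp
      ring
    have hiso : (repGraph (hypPlane F) a).edist 0 i ≤ 3 :=
      iso_edist_le3 ha h5 i (by rw [hi, mul_zero])
    calc (repGraph (hypPlane F) a).edist 0 v
        ≤ (repGraph (hypPlane F) a).edist 0 i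
          + (repGraph (hypPlane F) a).edist i v := SimpleGraph.edist_triangle
      _ ≤ 3 + 1 := add_le_add hiso (adj_edist_le_one hadj)
      _ = 4 := by norm_num

lemma small_not_connected (ha : a ≠ 0) (hlt : Cardinal.mk F < 5) :
    ¬ (repGraph (hypPlane F) a).Connected := by
  intro hconn
  have hfin : Finite F := by
    rw [← Cardinal.lt_aleph0_iff_finite]
    exact hlt.trans (by exact_mod_cast Cardinal.nat_lt_aleph0 5)
  haveI := Fintype.ofFinite F
  set q := Fintype.card F with hq
  have hcard : (q : Cardinal) < 5 := by rwa [← Cardinal.mk_fintype]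
  have hq5 : q < 5 := by exact_mod_cast hcard
  have hq2 : 2 ≤ q := Fintype.one_lt_card
  have main : ∃ f : F × F → F, (∀ u v, (repGraph (hypPlane F) a).Adj u v → f u = f v)
      ∧ f 0 = 0 ∧ f (0, 1) ≠ 0 := by
    have hcases : q = 3 ∨ (q = 2 ∨ q = 4) := by omega
    rcases hcases with h3 | h24
    · refine ⟨fun w => a * w.1 - w.2, ?_, by simp, by simp [ha]⟩
      intro u v huv
      have hts := (repAdj_iff ha u v).mp huv
      have ht0 : u.1 - v.1 ≠ 0 := fun h => ha (by rw [← hts, h, zero_mul])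
      have ht2 : (u.1 - v.1) ^ 2 = 1 := by
        have := FiniteField.pow_card_sub_one_eq_one (u.1 - v.1) ht0
        rwa [← hq, h3] at this
      show a * u.1 - u.2 = a * v.1 - v.2
      linear_combination (-(u.1 - v.1)) * hts + (u.2 - v.2) * ht2
    · have h2 : (2 : F) = 0 := by
        have hc := FiniteField.cast_card_eq_zero F
        rw [← hq] at hc
        rcases h24 with h | h
        · rw [h] at hc; exact_mod_cast hc
        · rw [h] at hc
          have h4 : (2 : F) * 2 = 0 := by
            rw [← hc]; norm_num
          rcases mul_eq_zero.mp h4 with h' | h' <;> exact h'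
      refine ⟨fun w => a ^ 2 * w.1 + w.2 ^ 2, ?_, by simp, by simp [one_ne_zero]⟩
      intro u v huv
      have hts := (repAdj_iff ha u v).mp huv
      have ht0 : u.1 - v.1 ≠ 0 := fun h => ha (by rw [← hts, h, zero_mul])
      have ht3 : (u.1 - v.1) ^ 3 = 1 := by
        have hpow := FiniteField.pow_card_sub_one_eq_one (u.1 - v.1) ht0
        rw [← hq] at hpow
        rcases h24 with h | h
        · rw [h] at hpow
          have h1 : u.1 - v.1 = 1 := by simpa using hpow
          rw [h1, one_pow]
        · rwa [h] at hpow
      show a ^ 2 * u.1 + u.2 ^ 2 = a ^ 2 * v.1 + v.2 ^ 2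
      linear_combination (-((u.1 - v.1) * (a + (u.1 - v.1) * (u.2 - v.2)))) * hts
        + (u.2 - v.2) ^ 2 * ht3 + ((u.2 - v.2) ^ 2 + (u.2 - v.2) * v.2) * h2
  obtain ⟨f, hf, hf0, hf1⟩ := main
  exact hf1 ((walk_const f hf (hconn 0 (0, 1))).symm.trans hf0)

end RepGraphHelpers

/-- For the hyperbolic plane `H` over `F` and `a ≠ 0`: `G_{H,a}` is connected iff `|F| ≥ 5`;
moreover if `|F| ≥ 5` then every isotropic vector is at distance at most `3` from the
origin and `diam G_{H,a} ≤ 4`. -/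
theorem stmt_6 {F : Type*} [Field F] (a : F) (ha : a ≠ 0) :
    ((repGraph (hypPlane F) a).Connected ↔ 5 ≤ Cardinal.mk F) ∧
    (5 ≤ Cardinal.mk F →
      (∀ v : F × F, hypPlane F v = 0 → (repGraph (hypPlane F) a).edist 0 v ≤ 3) ∧
      (repGraph (hypPlane F) a).ediam ≤ 4) := by
  have le4 : 5 ≤ Cardinal.mk F →
      ∀ u v : F × F, (repGraph (hypPlane F) a).edist u v ≤ 4 := by
    intro h5 u v
    exact (edist_zero_sub u v).trans (edist_zero_le4 ha h5 (v - u))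
  refine ⟨⟨fun hconn => ?_, fun h5 => ?_⟩, fun h5 => ⟨fun v hv => ?_, ?_⟩⟩
  · by_contra h5
    exact small_not_connected ha (lt_of_not_ge h5) hconn
  · rw [SimpleGraph.connected_iff]
    refine ⟨fun u v => ?_, ⟨0⟩⟩
    have h4 := le4 h5 u v
    apply SimpleGraph.reachable_of_edist_ne_top
    intro htop
    rw [htop] at h4
    exact (by norm_num : ¬ ((⊤ : ℕ∞) ≤ 4)) h4
  · exact iso_edist_le3 ha h5 v hv
  · exact SimpleGraph.ediam_le_of_edist_le (le4 h5)
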